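/- Let n be a non-negative integer and d = 2^n. Let b_1, b_2, c_1, c_2, x_1 ∈ ℝ^d with (b_1; b_2) ≤ (c_1; c_2) componentwise. If (b_1 + b_2)/2 ≤ A_n x_1 ≤ (c_1 + c_2)/2 componentwise, then D_n^{-1} max(b_1 − A_n x_1, −c_2 + A_n x_1) ≤ D_n^{-1} min(c_1 − A_n x_1, −b_2 + A_n x_1) componentwise; in particular there exists x_2 ∈ ℝ^d with D_n^{-1} max(b_1 − A_n x_1, −c_2 + A_n x_1) ≤ A_n x_2 ≤ D_n^{-1} min(c_1 − A_n x_1, −b_2 + A_n x_1). -/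
import Mathlib

/-- σ(n,k) from the paper: σ(0,1)=1 and, with d = 2^n, σ(n+1,k)=σ(n,k) for 1 ≤ k ≤ d,
σ(n+1,k)=2d+1−σ(n,k−d) for d+1 ≤ k ≤ 2d. -/
def sigmaCF : ℕ → ℕ → ℤ
  | 0, _ => 1
  | n + 1, k => if k ≤ 2 ^ n then sigmaCF n k else 2 * 2 ^ n + 1 - sigmaCF n (k - 2 ^ n)

/-- ξ_{n,k} = 2 cos(π(2σ(n,k) − 1)/2^{n+1}). -/
noncomputable def xiCF (n k : ℕ) : ℝ :=
  2 * Real.cos (Real.pi * (2 * (sigmaCF n k : ℝ) - 1) / 2 ^ (n + 1))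

/-- D_n = diag(ξ_{n+1,1}, …, ξ_{n+1,2^n}). -/
noncomputable def DCF (n : ℕ) : Matrix (Fin (2 ^ n)) (Fin (2 ^ n)) ℝ :=
  Matrix.diagonal fun i => xiCF (n + 1) (i.val + 1)

/-- A_0 = (1), A_{n+1} = [[A_n, D_n A_n], [A_n, −D_n A_n]]. -/
noncomputable def ACF : (n : ℕ) → Matrix (Fin (2 ^ n)) (Fin (2 ^ n)) ℝ
  | 0 => 1
  | n + 1 =>
    Matrix.reindex (finSumFinEquiv.trans (finCongr (by rw [pow_succ, mul_two])))
      (finSumFinEquiv.trans (finCongr (by rw [pow_succ, mul_two])))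
      (Matrix.fromBlocks (ACF n) (DCF n * ACF n) (ACF n) (-(DCF n * ACF n)))

/-- Vertical concatenation (x; y) of two vectors of length 2^n. -/
def vcat {α : Type*} {n : ℕ} (x y : Fin (2 ^ n) → α) : Fin (2 ^ (n + 1)) → α :=
  fun i => Fin.append x y (finCongr (by rw [pow_succ, mul_two]) i)

lemma sigma_bounds : ∀ n k, 1 ≤ k → k ≤ 2 ^ n → 1 ≤ sigmaCF n k ∧ sigmaCF n k ≤ 2 ^ n := by
  intro n
  induction n with
  | zero => intro k _ _; simp [sigmaCF]
  | succ n ih =>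
    intro k hk1 hk2
    have hp : (0:ℤ) < 2 ^ n := by positivity
    have he : (2:ℤ) ^ (n+1) = 2 * 2 ^ n := by ring
    by_cases h : k ≤ 2 ^ n
    · obtain ⟨a, b⟩ := ih k hk1 h
      simp only [sigmaCF, h, if_true]
      omega
    · have h1 : 1 ≤ k - 2 ^ n := by omega
      have h2 : k - 2 ^ n ≤ 2 ^ n := by
        have : (2:ℕ) ^ (n+1) = 2 * 2 ^ n := by ring
        omega
      obtain ⟨a, b⟩ := ih _ h1 h2
      simp only [sigmaCF, h, if_false]
      omega

lemma xi_pos (n k : ℕ) (hk1 : 1 ≤ k) (hk2 : k ≤ 2 ^ n) : 0 < xiCF (n + 1) k := by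
  have hσ : sigmaCF (n+1) k = sigmaCF n k := by simp [sigmaCF, hk2]
  obtain ⟨a, b⟩ := sigma_bounds n k hk1 hk2
  have hs1 : (1:ℝ) ≤ (sigmaCF n k : ℝ) := by exact_mod_cast a
  have hs2 : (sigmaCF n k : ℝ) ≤ 2 ^ n := by exact_mod_cast b
  unfold xiCF
  rw [hσ]
  have hpi := Real.pi_pos
  have hden : (0:ℝ) < 2 ^ (n + 1 + 1) := by positivity
  have hpos : 0 < Real.cos (Real.pi * (2 * (sigmaCF n k : ℝ) - 1) / 2 ^ (n + 1 + 1)) := by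
    apply Real.cos_pos_of_mem_Ioo
    constructor
    · have : (0:ℝ) < Real.pi * (2 * (sigmaCF n k : ℝ) - 1) / 2 ^ (n + 1 + 1) := by
        apply div_pos (by nlinarith) hden
      linarith [Real.pi_pos]
    · rw [div_lt_iff₀ hden]
      have h2 : (2:ℝ) ^ (n + 1 + 1) = 4 * 2 ^ n := by ring
      nlinarith
  linarith

lemma DCF_entry_pos (n : ℕ) (i : Fin (2 ^ n)) : 0 < xiCF (n + 1) (i.val + 1) :=
  xi_pos n _ (by omega) (by omega)

lemma DCF_det_ne (n : ℕ) : (DCF n).det ≠ 0 := by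
  rw [DCF, Matrix.det_diagonal]
  exact Finset.prod_ne_zero_iff.mpr fun i _ => (DCF_entry_pos n i).ne'

lemma ACF_det_ne (n : ℕ) : (ACF n).det ≠ 0 := by
  induction n with
  | zero => simp [ACF]
  | succ n ih =>
    rw [ACF, Matrix.det_reindex_self]
    haveI := (ACF n).invertibleOfIsUnitDet (Ne.isUnit ih)
    rw [Matrix.det_fromBlocks₁₁]
    have hsimp : -(DCF n * ACF n) - ACF n * ⅟(ACF n) * (DCF n * ACF n)
        = (-2 : ℝ) • (DCF n * ACF n) := by
      rw [mul_invOf_self, Matrix.one_mul]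
      module
    rw [hsimp, Matrix.det_smul, Matrix.det_mul]
    simp only [Fintype.card_fin]
    exact mul_ne_zero ih (mul_ne_zero (pow_ne_zero _ (by norm_num))
      (mul_ne_zero (DCF_det_ne n) ih))

lemma Dinv_eq (n : ℕ) :
    (DCF n)⁻¹ = Matrix.diagonal (fun i => (xiCF (n + 1) (i.val + 1))⁻¹) := by
  apply Matrix.inv_eq_left_inv
  rw [DCF, Matrix.diagonal_mul_diagonal]
  have : (fun i : Fin (2 ^ n) => (xiCF (n + 1) (i.val + 1))⁻¹ * xiCF (n + 1) (i.val + 1))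
      = fun _ => (1 : ℝ) := funext fun i => inv_mul_cancel₀ (DCF_entry_pos n i).ne'
  rw [this, Matrix.diagonal_one]

lemma Dinv_apply (n : ℕ) (u : Fin (2 ^ n) → ℝ) (i : Fin (2 ^ n)) :
    (DCF n)⁻¹.mulVec u i = (xiCF (n + 1) (i.val + 1))⁻¹ * u i := by
  rw [Dinv_eq, Matrix.mulVec_diagonal]

lemma vcat_le {n : ℕ} {b₁ b₂ c₁ c₂ : Fin (2 ^ n) → ℝ}
    (h : vcat b₁ b₂ ≤ vcat c₁ c₂) : (∀ i, b₁ i ≤ c₁ i) ∧ ∀ i, b₂ i ≤ c₂ i := by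
  have he : 2 ^ (n + 1) = 2 ^ n + 2 ^ n := by rw [pow_succ, mul_two]
  constructor
  · intro i
    have key : finCongr he ((finCongr he).symm (Fin.castAdd (2 ^ n) i))
        = Fin.castAdd (2 ^ n) i := Equiv.apply_symm_apply _ _
    have := h ((finCongr he).symm (Fin.castAdd (2 ^ n) i))
    simp only [vcat, key, Fin.append_left] at this
    exact this
  · intro i
    have key : finCongr he ((finCongr he).symm (Fin.natAdd (2 ^ n) i))
        = Fin.natAdd (2 ^ n) i := Equiv.apply_symm_apply _ _
    have := h ((finCongr he).symm (Fin.natAdd (2 ^ n) i))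
    simp only [vcat, key, Fin.append_right] at this
    exact this

/-- If `(b₁; b₂) ≤ (c₁; c₂)` componentwise and `(b₁+b₂)/2 ≤ A_n x₁ ≤ (c₁+c₂)/2`
componentwise, then `D_n⁻¹ max(b₁ − A_n x₁, −c₂ + A_n x₁) ≤ D_n⁻¹ min(c₁ − A_n x₁, −b₂ + A_n x₁)`
componentwise; in particular there exists `x₂` with
`D_n⁻¹ max(b₁ − A_n x₁, −c₂ + A_n x₁) ≤ A_n x₂ ≤ D_n⁻¹ min(c₁ − A_n x₁, −b₂ + A_n x₁)`. -/
theorem ACF_box_nonempty (n : ℕ) (b₁ b₂ c₁ c₂ x₁ : Fin (2 ^ n) → ℝ)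
    (hbc : vcat b₁ b₂ ≤ vcat c₁ c₂)
    (hlo : (fun i => (b₁ i + b₂ i) / 2) ≤ (ACF n).mulVec x₁)
    (hhi : (ACF n).mulVec x₁ ≤ fun i => (c₁ i + c₂ i) / 2) :
    (DCF n)⁻¹.mulVec
        (fun i => max (b₁ i - (ACF n).mulVec x₁ i) (-c₂ i + (ACF n).mulVec x₁ i)) ≤
      (DCF n)⁻¹.mulVec
        (fun i => min (c₁ i - (ACF n).mulVec x₁ i) (-b₂ i + (ACF n).mulVec x₁ i)) ∧
    ∃ x₂ : Fin (2 ^ n) → ℝ,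
      (DCF n)⁻¹.mulVec
          (fun i => max (b₁ i - (ACF n).mulVec x₁ i) (-c₂ i + (ACF n).mulVec x₁ i)) ≤
        (ACF n).mulVec x₂ ∧
      (ACF n).mulVec x₂ ≤
        (DCF n)⁻¹.mulVec
          (fun i => min (c₁ i - (ACF n).mulVec x₁ i) (-b₂ i + (ACF n).mulVec x₁ i)) := by
  obtain ⟨h1, h2⟩ := vcat_le hbc
  set A := (ACF n).mulVec x₁ with hA
  set L := (DCF n)⁻¹.mulVec (fun i => max (b₁ i - A i) (-c₂ i + A i)) with hL
  set U := (DCF n)⁻¹.mulVec (fun i => min (c₁ i - A i) (-b₂ i + A i)) with hU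
  have hLU : L ≤ U := by
    intro i
    rw [hL, hU, Dinv_apply, Dinv_apply]
    have hlo' := hlo i
    have hhi' := hhi i
    simp only at hlo' hhi'
    have hmm : max (b₁ i - A i) (-c₂ i + A i) ≤ min (c₁ i - A i) (-b₂ i + A i) := by
      apply max_le <;> apply le_min <;> [skip; skip; skip; skip] <;>
        first
          | linarith [h1 i, h2 i]
    exact mul_le_mul_of_nonneg_left hmm (inv_nonneg.mpr (DCF_entry_pos n i).le)
  refine ⟨hLU, ?_⟩
  set y : Fin (2 ^ n) → ℝ := fun i => (L i + U i) / 2 with hy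
  refine ⟨(ACF n)⁻¹.mulVec y, ?_, ?_⟩ <;>
  · have hAy : (ACF n).mulVec ((ACF n)⁻¹.mulVec y) = y := by
      rw [Matrix.mulVec_mulVec, Matrix.mul_nonsing_inv _ (Ne.isUnit (ACF_det_ne n)),
        Matrix.one_mulVec]
    rw [hAy]
    intro i
    have := hLU i
    simp only [hy]
    linarith
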